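/- Let X₁, X₂, X₃ be an ℝ-basis of su(2) with structure constants c^k_{ij}. Then the structure matrix C is symmetric, i.e. c¹₃₁ = c²₂₃, c¹₁₂ = c³₂₃, and c²₁₂ = c³₃₁ (equivalently, c²₂₁ + c³₃₁ = 0, c¹₁₂ + c³₃₂ = 0, and c¹₁₃ + c²₂₃ = 0). -/

import Mathlib

open Matrix BigOperators

lemma trace_conjTranspose_mul_self_eq_zero' {n : Type*} [Fintype n] [DecidableEq n]
    (A : Matrix n n ℂ) (h : (Aᴴ * A).trace = 0) : A = 0 := by
  have h1 : (Aᴴ * A).trace = (↑(∑ j, ∑ i, Complex.normSq (A i j)) : ℂ) := by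
    simp [Matrix.trace, Matrix.diag, Matrix.mul_apply, Matrix.conjTranspose_apply,
      Complex.normSq_eq_conj_mul_self]
  rw [h1] at h
  have h2 : (∑ j, ∑ i, Complex.normSq (A i j)) = 0 := by exact_mod_cast h
  ext i j
  have := (Finset.sum_eq_zero_iff_of_nonneg (fun j _ => Finset.sum_nonneg
    (fun i _ => Complex.normSq_nonneg _))).mp h2 j (Finset.mem_univ j)
  have := (Finset.sum_eq_zero_iff_of_nonneg (fun i _ => Complex.normSq_nonneg _)).mp
    this i (Finset.mem_univ i)
  simpa using Complex.normSq_eq_zero.mp this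

theorem structure_matrix_symmetric
    (X : Fin 3 → Matrix (Fin 2) (Fin 2) ℂ)
    (hmem : ∀ i, (X i)ᴴ = -X i ∧ (X i).trace = 0)
    (hind : LinearIndependent ℝ X)
    (hspan : ∀ A : Matrix (Fin 2) (Fin 2) ℂ, Aᴴ = -A → A.trace = 0 →
      A ∈ Submodule.span ℝ (Set.range X))
    (c : Fin 3 → Fin 3 → Fin 3 → ℝ)
    (hc : ∀ i j, X i * X j - X j * X i = ∑ k, c k i j • X k) :
    c 0 2 0 = c 1 1 2 ∧ c 0 0 1 = c 2 1 2 ∧ c 1 0 1 = c 2 2 0 := by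
  classical
  set t : Fin 3 → Fin 3 → ℂ := fun i j => (X i * X j).trace with ht
  have tsymm : ∀ i j, t i j = t j i := fun i j => Matrix.trace_mul_comm _ _
  have treal : ∀ i j, ((t i j).re : ℂ) = t i j := by
    intro i j
    rw [← Complex.conj_eq_iff_re]
    calc (starRingEnd ℂ) (t i j) = ((X i * X j)ᴴ).trace := by
          rw [Matrix.trace_conjTranspose]; rfl
      _ = ((X j)ᴴ * (X i)ᴴ).trace := by rw [Matrix.conjTranspose_mul]
      _ = ((-X j) * (-X i)).trace := by rw [(hmem i).1, (hmem j).1]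
      _ = t j i := by simp [ht]
      _ = t i j := (tsymm i j).symm
  have key : ∀ i j l, ∑ k, (c k i j : ℂ) * t k l = ((X i * X j - X j * X i) * X l).trace := by
    intro i j l
    rw [hc i j, Finset.sum_mul, Matrix.trace_sum]
    refine Finset.sum_congr rfl fun k _ => ?_
    rw [Matrix.smul_mul, Matrix.trace_smul, Complex.real_smul]
  have cyc : ∀ A B C : Matrix (Fin 2) (Fin 2) ℂ,
      ((A * B - B * A) * C).trace = ((B * C - C * B) * A).trace := by
    intro A B C
    rw [Matrix.sub_mul, Matrix.sub_mul, Matrix.trace_sub, Matrix.trace_sub,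
      Matrix.trace_mul_cycle B C A, Matrix.trace_mul_cycle B A C]
  have fz1 : ∀ A B : Matrix (Fin 2) (Fin 2) ℂ, ((A * B - B * A) * A).trace = 0 := by
    intro A B
    rw [Matrix.sub_mul, Matrix.trace_sub, Matrix.trace_mul_cycle B A A, sub_self]
  have fz2 : ∀ A B : Matrix (Fin 2) (Fin 2) ℂ, ((A * B - B * A) * B).trace = 0 := by
    intro A B
    rw [Matrix.sub_mul, Matrix.trace_sub, Matrix.trace_mul_cycle A B B, sub_self]
  set P : Matrix (Fin 3) (Fin 3) ℝ :=
    Matrix.of (fun k m => c k (![1, 2, 0] m) (![2, 0, 1] m)) with hPdef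
  set G : Matrix (Fin 3) (Fin 3) ℝ := Matrix.of (fun i j => (t i j).re) with hGdef
  have entry : ∀ l m : Fin 3, (((G * P) l m : ℝ) : ℂ) =
      ((X (![1, 2, 0] m) * X (![2, 0, 1] m) - X (![2, 0, 1] m) * X (![1, 2, 0] m)) * X l).trace := by
    intro l m
    rw [← key, Matrix.mul_apply]
    push_cast
    refine Finset.sum_congr rfl fun k _ => ?_
    have hg : ((G l k : ℝ) : ℂ) = t k l := by
      rw [hGdef]; simp only [Matrix.of_apply]; rw [treal, tsymm]
    rw [hg, mul_comm]
    congr 1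
  have E00 : (((G * P) 0 0 : ℝ) : ℂ) = ((X 1 * X 2 - X 2 * X 1) * X 0).trace := entry 0 0
  have E11 : (((G * P) 1 1 : ℝ) : ℂ) = ((X 2 * X 0 - X 0 * X 2) * X 1).trace := entry 1 1
  have E22 : (((G * P) 2 2 : ℝ) : ℂ) = ((X 0 * X 1 - X 1 * X 0) * X 2).trace := entry 2 2
  have E10 : (((G * P) 1 0 : ℝ) : ℂ) = ((X 1 * X 2 - X 2 * X 1) * X 1).trace := entry 1 0
  have E20 : (((G * P) 2 0 : ℝ) : ℂ) = ((X 1 * X 2 - X 2 * X 1) * X 2).trace := entry 2 0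
  have E01 : (((G * P) 0 1 : ℝ) : ℂ) = ((X 2 * X 0 - X 0 * X 2) * X 0).trace := entry 0 1
  have E21 : (((G * P) 2 1 : ℝ) : ℂ) = ((X 2 * X 0 - X 0 * X 2) * X 2).trace := entry 2 1
  have E02 : (((G * P) 0 2 : ℝ) : ℂ) = ((X 0 * X 1 - X 1 * X 0) * X 0).trace := entry 0 2
  have E12 : (((G * P) 1 2 : ℝ) : ℂ) = ((X 0 * X 1 - X 1 * X 0) * X 1).trace := entry 1 2
  have inj : Function.Injective (fun r : ℝ => (r : ℂ)) := Complex.ofReal_injective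
  have g11 : (G * P) 1 1 = (G * P) 0 0 := by
    apply inj
    show (((G * P) 1 1 : ℝ) : ℂ) = (((G * P) 0 0 : ℝ) : ℂ)
    rw [E11, E00]; exact (cyc (X 1) (X 2) (X 0)).symm
  have g22 : (G * P) 2 2 = (G * P) 0 0 := by
    apply inj
    show (((G * P) 2 2 : ℝ) : ℂ) = (((G * P) 0 0 : ℝ) : ℂ)
    rw [E22, E00, cyc (X 1) (X 2) (X 0), cyc (X 2) (X 0) (X 1)]
  have g10 : (G * P) 1 0 = 0 := by
    apply inj
    show (((G * P) 1 0 : ℝ) : ℂ) = ((0 : ℝ) : ℂ)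
    rw [E10]; simpa using fz1 (X 1) (X 2)
  have g20 : (G * P) 2 0 = 0 := by
    apply inj
    show (((G * P) 2 0 : ℝ) : ℂ) = ((0 : ℝ) : ℂ)
    rw [E20]; simpa using fz2 (X 1) (X 2)
  have g01 : (G * P) 0 1 = 0 := by
    apply inj
    show (((G * P) 0 1 : ℝ) : ℂ) = ((0 : ℝ) : ℂ)
    rw [E01]; simpa using fz2 (X 2) (X 0)
  have g21 : (G * P) 2 1 = 0 := by
    apply inj
    show (((G * P) 2 1 : ℝ) : ℂ) = ((0 : ℝ) : ℂ)
    rw [E21]; simpa using fz1 (X 2) (X 0)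
  have g02 : (G * P) 0 2 = 0 := by
    apply inj
    show (((G * P) 0 2 : ℝ) : ℂ) = ((0 : ℝ) : ℂ)
    rw [E02]; simpa using fz1 (X 0) (X 1)
  have g12 : (G * P) 1 2 = 0 := by
    apply inj
    show (((G * P) 1 2 : ℝ) : ℂ) = ((0 : ℝ) : ℂ)
    rw [E12]; simpa using fz2 (X 0) (X 1)
  have hGP1 : G * P = ((G * P) 0 0) • (1 : Matrix (Fin 3) (Fin 3) ℝ) := by
    ext l m
    fin_cases l <;> fin_cases m <;>
      simp [Matrix.one_apply, g11, g22, g10, g20, g01, g21, g02, g12]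
  have hnd : G.Nondegenerate := by
    rw [Matrix.nondegenerate_iff_separatingLeft, Matrix.separatingLeft_def]
    intro v hv
    have hv' : ∀ k, ∑ l, v l * (t l k).re = 0 := by
      intro k
      have h := hv (Pi.single k 1)
      simpa [dotProduct, Matrix.mulVec, Pi.single_apply, hGdef,
        Finset.mul_sum] using h
    set A : Matrix (Fin 2) (Fin 2) ℂ := ∑ l, v l • X l with hA
    have hAX : ∀ k, (A * X k).trace = 0 := by
      intro k
      rw [hA, Finset.sum_mul, Matrix.trace_sum]
      have h1 : ∀ l, ((v l • X l) * X k).trace = (v l : ℂ) * t l k := by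
        intro l
        rw [Matrix.smul_mul, Matrix.trace_smul, Complex.real_smul]
      simp only [h1]
      have h2 : ((∑ l, v l * (t l k).re : ℝ) : ℂ) = 0 := by rw [hv' k]; norm_num
      rw [← h2]
      push_cast
      refine Finset.sum_congr rfl fun l _ => ?_
      rw [treal]
    have hA1 : Aᴴ = -A := by
      rw [hA]
      simp only [Matrix.conjTranspose_sum, Matrix.conjTranspose_smul]
      rw [← Finset.sum_neg_distrib]
      refine Finset.sum_congr rfl fun l _ => ?_
      rw [(hmem l).1]
      simp
    have hA2 : A.trace = 0 := by
      rw [hA, Matrix.trace_sum]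
      refine Finset.sum_eq_zero fun l _ => ?_
      rw [Matrix.trace_smul, (hmem l).2, smul_zero]
    have hAB : ∀ B ∈ Submodule.span ℝ (Set.range X), (A * B).trace = 0 := by
      intro B hB
      induction hB using Submodule.span_induction with
      | mem B hB => obtain ⟨k, rfl⟩ := hB; exact hAX k
      | zero => simp
      | add B C _ _ hB hC => rw [Matrix.mul_add, Matrix.trace_add, hB, hC, add_zero]
      | smul r B _ hB => rw [Matrix.mul_smul, Matrix.trace_smul, hB, smul_zero]
    have hAA : (Aᴴ * A).trace = 0 := by
      rw [hA1, Matrix.neg_mul, Matrix.trace_neg, hAB A (hspan A hA1 hA2), neg_zero]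
    have hA0 : A = 0 := trace_conjTranspose_mul_self_eq_zero' A hAA
    have hz := (Fintype.linearIndependent_iff.mp hind) v (by rw [← hA, hA0])
    funext l; exact hz l
  have hdet : G.det ≠ 0 := hnd.det_ne_zero
  obtain ⟨F, hGP2⟩ : ∃ F : ℝ, G * P = F • (1 : Matrix (Fin 3) (Fin 3) ℝ) := ⟨_, hGP1⟩
  have hPeq : P = F • G⁻¹ := by
    calc P = G⁻¹ * (G * P) := by
          rw [← Matrix.mul_assoc, Matrix.nonsing_inv_mul _ (Ne.isUnit hdet), Matrix.one_mul]
      _ = F • G⁻¹ := by rw [hGP2, Matrix.mul_smul, Matrix.mul_one]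
  have hGsymm : Gᵀ = G := by
    ext i j
    simp only [Matrix.transpose_apply, hGdef, Matrix.of_apply]
    exact congrArg Complex.re (tsymm j i)
  have hPsymm : Pᵀ = P := by
    rw [hPeq, Matrix.transpose_smul, Matrix.transpose_nonsing_inv, hGsymm]
  have hsym : ∀ k m : Fin 3, P m k = P k m := fun k m => congrFun (congrFun hPsymm k) m
  refine ⟨?_, ?_, ?_⟩
  · have h := hsym 1 0; rw [hPdef] at h; simpa using h
  · have h := hsym 2 0; rw [hPdef] at h; simpa using h
  · have h := hsym 2 1; rw [hPdef] at h; simpa using h
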